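/- Let G = N⟨a⟩ where N is an SLC group with unique nonidentity commutator s and canonical involution *, and a is a central element of G not in N with a* defined to be sa; extend * to G by (na)* = sn*a. Then * is an involution (anti-automorphism of order 2) on G. -/

import Mathlib

open scoped commutatorElement

/-- let `G = N⟨a⟩` with `N` SLC (unique nonidentity commutator `s`,
canonical involution) and `a` central, `a ∉ N`, `a* = sa`; the extension of the
canonical involution of `N` to `G` by `(na)* = s n* a` is an involution on `G`. -/
theorem slc_extension_is_involution {G : Type*} [Group G]
    (N : Subgroup G) (s : G) (hsN : s ∈ N) (hs1 : s ≠ 1)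
    (huniq : ∀ n ∈ N, ∀ m ∈ N, ⁅n, m⁆ = 1 ∨ ⁅n, m⁆ = s)
    (hex : ∃ n ∈ N, ∃ m ∈ N, ⁅n, m⁆ = s)
    (hLC : ∀ n ∈ N, ∀ m ∈ N, n * m = m * n →
      (∀ k ∈ N, n * k = k * n) ∨ (∀ k ∈ N, m * k = k * m) ∨
        (∀ k ∈ N, (n * m) * k = k * (n * m)))
    (a : G) (haC : a ∈ Subgroup.center G) (haN : a ∉ N)
    (hgen : ∀ g : G, g ∈ N ∨ ∃ n ∈ N, g = n * a)
    (st : G → G)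
    (h1 : ∀ n ∈ N, (∀ m ∈ N, n * m = m * n) → st n = n)
    (h2 : ∀ n ∈ N, ¬(∀ m ∈ N, n * m = m * n) → st n = s * n)
    (h3 : ∀ n ∈ N, st (n * a) = s * st n * a) :
    (∀ g h : G, st (g * h) = st h * st g) ∧ (∀ g : G, st (st g) = g) := by
  classical
  have ha : ∀ g : G, a * g = g * a := fun g => (Subgroup.mem_center_iff.mp haC g).symm
  -- s has order 2
  obtain ⟨n₀, hn₀, m₀, hm₀, hc₀⟩ := hex
  have hsinv : s⁻¹ = s := by
    rcases huniq m₀ hm₀ n₀ hn₀ with h | h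
    · exfalso; apply hs1
      rw [← commutatorElement_inv, hc₀] at h
      exact inv_eq_one.mp h
    · rw [← commutatorElement_inv, hc₀] at h
      exact h
  have hss : s * s = 1 := by nth_rewrite 1 [← hsinv]; exact inv_mul_cancel s
  -- s commutes with all of N
  have hsc : ∀ k ∈ N, s * k = k * s := by
    intro k hk
    rcases huniq s hsN k hk with h | h
    · exact (commutatorElement_eq_one_iff_commute.mp h).eq
    · exfalso; apply hs1
      rw [commutatorElement_def] at h
      have h2' : k * s⁻¹ * k⁻¹ = 1 := by
        apply mul_left_cancel (a := s)
        rw [mul_one, ← mul_assoc, ← mul_assoc]; exact h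
      have h3' : s⁻¹ = 1 := by
        have := congrArg (fun x => k⁻¹ * x * k) h2'
        simpa [mul_assoc] using this
      simpa using inv_eq_one.mp h3'
  -- s commutes with everything
  have hsAll : ∀ g : G, s * g = g * s := by
    intro g
    rcases hgen g with hg | ⟨n, hn, rfl⟩
    · exact hsc g hg
    · rw [← mul_assoc, hsc n hn, mul_assoc, ← ha s, ← mul_assoc]
  have hkey : ∀ x y : G, s * x = x * s → (s * x) * (s * y) = x * y := by
    intro x y hx
    rw [mul_assoc, ← mul_assoc x s y, ← hx, mul_assoc, ← mul_assoc, hss, one_mul]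
  have stN : ∀ n ∈ N, st n ∈ N := by
    intro n hn
    by_cases hc : ∀ m ∈ N, n * m = m * n
    · rw [h1 n hn hc]; exact hn
    · rw [h2 n hn hc]; exact mul_mem hsN hn
  -- anti-homomorphism on N
  have lemA : ∀ n ∈ N, ∀ m ∈ N, st (n * m) = st m * st n := by
    intro n hn m hm
    by_cases hcn : ∀ k ∈ N, n * k = k * n
    · by_cases hcm : ∀ k ∈ N, m * k = k * m
      · have hnm : ∀ k ∈ N, (n * m) * k = k * (n * m) := by
          intro k hk
          rw [mul_assoc, hcm k hk, ← mul_assoc, hcn k hk, mul_assoc]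
        rw [h1 _ (mul_mem hn hm) hnm, h1 n hn hcn, h1 m hm hcm, hcn m hm]
      · have hnm : ¬ ∀ k ∈ N, (n * m) * k = k * (n * m) := by
          intro hc; apply hcm; intro k hk
          have h' : n * (m * k) = n * (k * m) := by
            rw [← mul_assoc, hc k hk, ← mul_assoc, ← hcn k hk, mul_assoc]
          exact mul_left_cancel h'
        rw [h2 _ (mul_mem hn hm) hnm, h1 n hn hcn, h2 m hm hcm, hcn m hm, mul_assoc]
    · by_cases hcm : ∀ k ∈ N, m * k = k * m
      · have hnm : ¬ ∀ k ∈ N, (n * m) * k = k * (n * m) := by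
          intro hc; apply hcn; intro k hk
          have h' : (n * k) * m = (k * n) * m := by
            rw [mul_assoc, ← hcm k hk, ← mul_assoc, hc k hk, ← mul_assoc]
          exact mul_right_cancel h'
        rw [h2 _ (mul_mem hn hm) hnm, h1 m hm hcm, h2 n hn hcn,
          ← hcm n hn, ← mul_assoc, hsc m hm, mul_assoc]
      · by_cases hcomm : n * m = m * n
        · rcases hLC n hn m hm hcomm with h | h | h
          · exact absurd h hcn
          · exact absurd h hcm
          · rw [h1 _ (mul_mem hn hm) h, h2 m hm hcm, h2 n hn hcn,
              hkey m n (hsc m hm)]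
            exact hcomm
        · have hcmt : ⁅n, m⁆ = s := by
            rcases huniq n hn m hm with h | h
            · exact absurd (commutatorElement_eq_one_iff_commute.mp h).eq hcomm
            · exact h
          have hnmNC : ¬ ∀ k ∈ N, (n * m) * k = k * (n * m) := by
            intro hc
            have := hc m hm
            rw [← mul_assoc] at this
            exact hcomm (mul_right_cancel this)
          have hd : n * m = s * (m * n) := by
            rw [← hcmt, commutatorElement_def]; group
          rw [h2 _ (mul_mem hn hm) hnmNC, h2 m hm hcm, h2 n hn hcn,
            hkey m n (hsc m hm), hd, ← mul_assoc, hss, one_mul]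
  -- involution on N
  have lemB : ∀ n ∈ N, st (st n) = n := by
    intro n hn
    by_cases hcn : ∀ k ∈ N, n * k = k * n
    · rw [h1 n hn hcn, h1 n hn hcn]
    · rw [h2 n hn hcn]
      have hne : ¬ ∀ k ∈ N, (s * n) * k = k * (s * n) := by
        intro hc; apply hcn; intro k hk
        have h' : s * (n * k) = s * (k * n) := by
          rw [← mul_assoc, hc k hk, ← mul_assoc, ← hsc k hk, mul_assoc]
        exact mul_left_cancel h'
      rw [h2 _ (mul_mem hsN hn) hne, ← mul_assoc, hss, one_mul]
  -- a² lies in N and is central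
  have ha2N : a * a ∈ N := by
    rcases hgen (a * a) with h | ⟨k, hk, hkeq⟩
    · exact h
    · exfalso
      have : a = k := mul_right_cancel hkeq
      exact haN (by rw [this]; exact hk)
  have hAA : ∀ x : G, (a * a) * x = x * (a * a) := by
    intro x
    rw [mul_assoc, ha x, ← mul_assoc, ha x, mul_assoc]
  have hst2 : st (a * a) = a * a :=
    h1 _ ha2N (fun k _ => hAA k)
  constructor
  · intro g h
    rcases hgen g with hg | ⟨n, hn, rfl⟩
    · rcases hgen h with hh | ⟨m, hm, rfl⟩
      · exact lemA g hg h hh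
      · have e1 : g * (m * a) = (g * m) * a := (mul_assoc g m a).symm
        rw [e1, h3 _ (mul_mem hg hm), lemA g hg m hm, h3 m hm,
          mul_assoc (s * st m) a (st g), ha (st g),
          ← mul_assoc s (st m) (st g), mul_assoc (s * st m) (st g) a]
    · rcases hgen h with hh | ⟨m, hm, rfl⟩
      · have e1 : (n * a) * h = (n * h) * a := by
          rw [mul_assoc, ha h, ← mul_assoc]
        rw [e1, h3 _ (mul_mem hn hh), lemA n hn h hh, h3 n hn,
          ← mul_assoc (st h), ← mul_assoc (st h) s (st n), ← hsAll (st h),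
          mul_assoc s (st h) (st n)]
      · have e1 : (n * a) * (m * a) = (n * m) * (a * a) := by
          rw [mul_assoc n a, ← mul_assoc a m a, ha m, mul_assoc m a a,
            ← mul_assoc n m (a * a)]
        rw [e1, lemA _ (mul_mem hn hm) _ ha2N, hst2, lemA n hn m hm,
          h3 m hm, h3 n hn]
        rw [mul_assoc (s * st m) a, ha ((s * st n) * a),
          mul_assoc (s * st n) a a, ← mul_assoc (s * st m),
          hkey (st m) (st n) (hsAll (st m)), ← hAA (st m * st n)]
  · intro g
    rcases hgen g with hg | ⟨n, hn, rfl⟩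
    · exact lemB g hg
    · rw [h3 n hn, h3 _ (mul_mem hsN (stN n hn)),
        lemA s hsN (st n) (stN n hn), lemB n hn, h1 s hsN hsc,
        ← hsAll n, ← mul_assoc s s n, hss, one_mul]
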